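/- Proposition 2 (no selection rule is dimensional Byzantine-resilient): Let m ≤ d and let A : (ℝ^d)^m → ℝ^d be any function satisfying A(w_1, …, w_m) ∈ {w_1, …, w_m} for all inputs. Then for every g ∈ ℝ^d, every v_1, …, v_m ∈ ℝ^d and every constant C > 0, there exist ṽ_1, …, ṽ_m ∈ ℝ^d such that each ṽ_i differs from v_i only in its i-th coordinate (so for every coordinate j, at most one index i satisfies (ṽ_i)_j ≠ (v_i)_j, i.e., q = 1 Byzantine value per dimension) and ‖A(ṽ_1, …, ṽ_m) − g‖² > C. -/

import Mathlib

/-- Proposition 2 (no selection rule is dimensional Byzantine-resilient):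
let `m ≤ d` and let `A` be any aggregation rule on `m` vectors in `ℝ^d` whose output
is always one of its inputs. Then for every `g`, every correct vectors `v_1, …, v_m`
and every `C > 0`, there exist `ṽ_1, …, ṽ_m` such that each `ṽ_i` differs from `v_i`
only in its `i`-th coordinate (so each dimension has at most `q = 1` Byzantine value)
and `‖A(ṽ_1, …, ṽ_m) - g‖² > C`. -/
theorem selection_not_dimensional_byzantine_resilient (m d : ℕ) (hmd : m ≤ d)
    (A : (Fin m → EuclideanSpace ℝ (Fin d)) → EuclideanSpace ℝ (Fin d))
    (hA : ∀ w, ∃ i : Fin m, A w = w i)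
    (g : EuclideanSpace ℝ (Fin d)) (v : Fin m → EuclideanSpace ℝ (Fin d))
    (C : ℝ) (hC : 0 < C) :
    ∃ vt : Fin m → EuclideanSpace ℝ (Fin d),
      (∀ (i : Fin m) (j : Fin d), (j : ℕ) ≠ (i : ℕ) → vt i j = v i j) ∧
      ‖A vt - g‖ ^ 2 > C := by
  set M : ℝ := Real.sqrt C + 1 + ∑ j, |g j| with hM
  set vt : Fin m → EuclideanSpace ℝ (Fin d) :=
    fun i => WithLp.toLp 2 (fun j : Fin d => if (j : ℕ) = (i : ℕ) then M else v i j) with hvt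
  refine ⟨vt, fun i j hj => by simp [hvt, hj], ?_⟩
  obtain ⟨i, hi⟩ := hA vt
  have hid : (i : ℕ) < d := lt_of_lt_of_le i.isLt hmd
  set j : Fin d := ⟨(i : ℕ), hid⟩ with hjdef
  have hcoord : A vt j = M := by
    rw [hi]
    show (if ((j : ℕ) = (i : ℕ)) then M else v i j) = M
    simp [hjdef]
  have hnorm : ‖A vt - g‖ ^ 2 = ∑ k, (A vt k - g k) ^ 2 := by
    rw [EuclideanSpace.norm_eq, Real.sq_sqrt (by positivity)]
    congr 1; ext k
    rw [show ((A vt - g) k) = A vt k - g k from rfl, Real.norm_eq_abs, sq_abs]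
  have hterm : (A vt j - g j) ^ 2 > C := by
    have h1 : |g j| ≤ ∑ k, |g k| :=
      Finset.single_le_sum (f := fun k => |g k|) (fun k _ => abs_nonneg _)
        (Finset.mem_univ j)
    have h2 : A vt j - g j ≥ Real.sqrt C + 1 := by
      rw [hcoord, hM]
      have := le_abs_self (g j)
      linarith
    have h3 : Real.sqrt C < A vt j - g j := by
      have : (0:ℝ) ≤ Real.sqrt C := Real.sqrt_nonneg C
      linarith
    calc C = Real.sqrt C ^ 2 := (Real.sq_sqrt hC.le).symm
      _ < (A vt j - g j) ^ 2 := by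
          apply pow_lt_pow_left₀ h3 (Real.sqrt_nonneg C) (by norm_num)
  have hsum : ∑ k, (A vt k - g k) ^ 2 ≥ (A vt j - g j) ^ 2 :=
    Finset.single_le_sum (f := fun k => (A vt k - g k) ^ 2)
      (fun k _ => sq_nonneg _) (Finset.mem_univ j)
  rw [hnorm]
  linarith
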